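/- Let H be a countable amenable group with Følner sequence (Φ_N), and let (a_g)_{g∈H} be a bounded family of elements of a Hilbert space. If limsup_{N→∞} (1/|Φ_N|²) · limsup_{M→∞} (1/|Φ_M|) Σ_{g∈Φ_M} Σ_{h,k∈Φ_N} ⟨a_{hg}, a_{kg}⟩ = 0, then limsup_{N→∞} ‖(1/|Φ_N|) Σ_{g∈Φ_N} a_g‖² = 0. -/

import Mathlib

open Filter

/-- A Følner sequence in a countable group `H`. -/
def IsFolner {H : Type*} [Group H] [DecidableEq H] (Φ : ℕ → Finset H) : Prop :=
  (∀ N, (Φ N).Nonempty) ∧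
    ∀ h : H, Tendsto
      (fun N => ((symmDiff ((Φ N).image (fun g => h * g)) (Φ N)).card : ℝ) / (Φ N).card)
      atTop (nhds 0)

private lemma avg_norm_le' {H : Type*} {E : Type*} [NormedAddCommGroup E] [NormedSpace ℝ E]
    (s : Finset H) (f : H → E) (C : ℝ) (hC : 0 ≤ C) (hf : ∀ g ∈ s, ‖f g‖ ≤ C) :
    ‖(1 / (s.card : ℝ)) • ∑ g ∈ s, f g‖ ≤ C := by
  rcases s.eq_empty_or_nonempty with h | h
  · simp [h, hC]
  · have hn : (0:ℝ) < s.card := by exact_mod_cast Finset.card_pos.mpr h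
    rw [norm_smul]
    have h1 : ‖∑ g ∈ s, f g‖ ≤ (s.card : ℝ) * C := by
      calc ‖∑ g ∈ s, f g‖ ≤ ∑ g ∈ s, ‖f g‖ := norm_sum_le _ _
        _ ≤ ∑ _g ∈ s, C := Finset.sum_le_sum hf
        _ = (s.card : ℝ) * C := by rw [Finset.sum_const, nsmul_eq_mul]
    have h2 : ‖(1 / (s.card : ℝ))‖ = 1 / (s.card:ℝ) := by
      rw [Real.norm_eq_abs, abs_of_pos (by positivity)]
    rw [h2]
    calc (1 / (s.card:ℝ)) * ‖∑ g ∈ s, f g‖ ≤ (1/(s.card:ℝ)) * ((s.card:ℝ)*C) :=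
        mul_le_mul_of_nonneg_left h1 (by positivity)
      _ = C := by field_simp

private lemma shift_avg_err {H : Type*} [Group H] [DecidableEq H] {E : Type*}
    [NormedAddCommGroup E] [NormedSpace ℝ E]
    (s : Finset H) (a : H → E) (C : ℝ) (hC : 0 ≤ C) (hf : ∀ g, ‖a g‖ ≤ C) (h : H) :
    ‖(1 / (s.card : ℝ)) • ∑ g ∈ s, a g - (1 / (s.card : ℝ)) • ∑ g ∈ s, a (h * g)‖
      ≤ C * ((symmDiff (s.image (fun g => h * g)) s).card : ℝ) / s.card := by
  have himg : ∑ g ∈ s, a (h * g) = ∑ g ∈ s.image (fun g => h * g), a g :=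
    (Finset.sum_image (by intro x _ y _ hxy; exact mul_left_cancel hxy)).symm
  set t := s.image (fun g => h * g) with ht
  have hcard : ((symmDiff t s).card : ℝ) = (s \ t).card + (t \ s).card := by
    rw [symmDiff_def, Finset.sup_eq_union,
      Finset.card_union_of_disjoint (disjoint_sdiff_sdiff)]
    push_cast; ring
  have hkey : (∑ g ∈ s, a g) - ∑ g ∈ t, a g
      = (∑ g ∈ s \ t, a g) - ∑ g ∈ t \ s, a g := (Finset.sum_sdiff_sub_sum_sdiff).symm
  rw [himg, ← smul_sub, hkey, norm_smul]
  have h2 : ‖(1 / (s.card : ℝ))‖ = 1 / (s.card:ℝ) := by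
    rw [Real.norm_eq_abs]
    exact abs_of_nonneg (by positivity)
  rw [h2]
  have hb : ∀ u : Finset H, ‖∑ g ∈ u, a g‖ ≤ C * u.card := fun u =>
    calc ‖∑ g ∈ u, a g‖ ≤ ∑ g ∈ u, ‖a g‖ := norm_sum_le _ _
      _ ≤ ∑ _g ∈ u, C := Finset.sum_le_sum fun g _ => hf g
      _ = C * u.card := by rw [Finset.sum_const, nsmul_eq_mul]; ring
  have h3 : ‖(∑ g ∈ s \ t, a g) - ∑ g ∈ t \ s, a g‖
      ≤ C * ((symmDiff t s).card : ℝ) := by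
    calc ‖(∑ g ∈ s \ t, a g) - ∑ g ∈ t \ s, a g‖
        ≤ ‖∑ g ∈ s \ t, a g‖ + ‖∑ g ∈ t \ s, a g‖ := norm_sub_le _ _
      _ ≤ C * (s \ t).card + C * (t \ s).card := add_le_add (hb _) (hb _)
      _ = C * ((symmDiff t s).card : ℝ) := by rw [hcard]; ring
  calc (1 / (s.card:ℝ)) * ‖(∑ g ∈ s \ t, a g) - ∑ g ∈ t \ s, a g‖
      ≤ (1 / (s.card:ℝ)) * (C * ((symmDiff t s).card : ℝ)) :=
        mul_le_mul_of_nonneg_left h3 (by positivity)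
    _ = C * ((symmDiff t s).card : ℝ) / s.card := by ring

set_option maxHeartbeats 1000000 in
/-- Van der Corput lemma for bounded Hilbert-space valued families indexed by a
countable amenable group (Bergelson–McCutcheon–Zhang). -/
theorem van_der_corput_amenable
    {H : Type*} [Group H] [DecidableEq H] [Countable H]
    {E : Type*} [NormedAddCommGroup E] [InnerProductSpace ℝ E] [CompleteSpace E]
    (Φ : ℕ → Finset H) (hΦ : IsFolner Φ)
    (a : H → E) (C : ℝ) (hbd : ∀ g, ‖a g‖ ≤ C)
    (hyp : limsup (fun N =>
        (1 / ((Φ N).card : ℝ) ^ 2) *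
          limsup (fun M => (1 / ((Φ M).card : ℝ)) *
            ∑ g ∈ Φ M, ∑ h ∈ Φ N, ∑ k ∈ Φ N, inner ℝ (a (h * g)) (a (k * g))) atTop)
      atTop = 0) :
    limsup (fun N => ‖(1 / ((Φ N).card : ℝ)) • ∑ g ∈ Φ N, a g‖ ^ 2) atTop = 0 := by
  obtain ⟨hne, hfol⟩ := hΦ
  have hC0 : 0 ≤ C := (norm_nonneg _).trans (hbd 1)
  -- notation
  set c : ℕ → ℝ := fun N => ((Φ N).card : ℝ) with hcdef
  have hcpos : ∀ N, (0:ℝ) < c N := fun N => by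
    have h1 : (0:ℝ) < ((Φ N).card : ℝ) := by exact_mod_cast Finset.card_pos.mpr (hne N)
    simpa [hcdef] using h1
  set A : ℕ → E := fun M => (1 / c M) • ∑ g ∈ Φ M, a g with hA
  have hAbd : ∀ M, ‖A M‖ ≤ C := fun M =>
    avg_norm_le' (Φ M) a C hC0 fun g _ => hbd g
  -- the double sum as a norm square
  set u : ℕ → H → E := fun N g => ∑ h ∈ Φ N, a (h * g) with hu
  have hub : ∀ N g, ‖u N g‖ ≤ c N * C := by
    intro N g
    calc ‖u N g‖ ≤ ∑ h ∈ Φ N, ‖a (h * g)‖ := norm_sum_le _ _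
      _ ≤ ∑ _h ∈ Φ N, C := Finset.sum_le_sum fun h _ => hbd _
      _ = c N * C := by rw [Finset.sum_const, nsmul_eq_mul]
  have hsq : ∀ N g, ∑ h ∈ Φ N, ∑ k ∈ Φ N, (inner ℝ (a (h * g)) (a (k * g)) : ℝ)
      = ‖u N g‖ ^ 2 := by
    intro N g
    rw [← real_inner_self_eq_norm_sq, hu, sum_inner]
    exact Finset.sum_congr rfl fun h _ => by rw [inner_sum]
  set T : ℕ → ℕ → ℝ := fun N M => (1 / c M) *
      ∑ g ∈ Φ M, ∑ h ∈ Φ N, ∑ k ∈ Φ N, (inner ℝ (a (h * g)) (a (k * g)) : ℝ) with hT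
  have hTnorm : ∀ N M, T N M = (1 / c M) * ∑ g ∈ Φ M, ‖u N g‖ ^ 2 := by
    intro N M
    rw [hT]
    exact congrArg _ (Finset.sum_congr rfl fun g _ => hsq N g)
  have hTnonneg : ∀ N M, 0 ≤ T N M := by
    intro N M
    rw [hTnorm]
    have := hcpos M
    positivity
  have hTle : ∀ N M, T N M ≤ (c N) ^ 2 * C ^ 2 := by
    intro N M
    rw [hTnorm]
    have h1 : ∑ g ∈ Φ M, ‖u N g‖ ^ 2 ≤ ∑ _g ∈ Φ M, (c N * C) ^ 2 :=
      Finset.sum_le_sum fun g _ => by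
        have := hub N g
        have := norm_nonneg (u N g)
        nlinarith
    have h2 : (∑ _g ∈ Φ M, (c N * C) ^ 2 : ℝ) = c M * ((c N * C) ^ 2) := by
      rw [Finset.sum_const, nsmul_eq_mul]
    have hM := hcpos M
    calc (1 / c M) * ∑ g ∈ Φ M, ‖u N g‖ ^ 2
        ≤ (1 / c M) * (c M * ((c N * C) ^ 2)) := by
          rw [← h2]; exact mul_le_mul_of_nonneg_left h1 (by positivity)
      _ = (c N) ^ 2 * C ^ 2 := by field_simp
  set f : ℕ → ℝ := fun N => (1 / (c N) ^ 2) * limsup (fun M => T N M) atTop with hf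
  have hyp' : limsup f atTop = 0 := hyp
  -- limsup of T is bounded
  have hTbddAbove : ∀ N, IsBoundedUnder (· ≤ ·) atTop (fun M => T N M) := by
    intro N
    exact isBoundedUnder_of ⟨(c N) ^ 2 * C ^ 2, fun M => hTle N M⟩
  have hTbddBelow : ∀ N, IsBoundedUnder (· ≥ ·) atTop (fun M => T N M) := by
    intro N
    exact isBoundedUnder_of ⟨0, fun M => hTnonneg N M⟩
  have hTlimsup_le : ∀ N, limsup (fun M => T N M) atTop ≤ (c N) ^ 2 * C ^ 2 := by
    intro N
    exact limsup_le_of_le (hTbddBelow N).isCoboundedUnder_le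
      (Eventually.of_forall fun M => hTle N M)
  have hTlimsup_nonneg : ∀ N, 0 ≤ limsup (fun M => T N M) atTop := fun N =>
    le_limsup_of_frequently_le (Frequently.of_forall fun M => hTnonneg N M) (hTbddAbove N)
  have hfle : ∀ N, f N ≤ C ^ 2 := by
    intro N
    have hN := hcpos N
    calc f N ≤ (1 / (c N) ^ 2) * ((c N) ^ 2 * C ^ 2) :=
        mul_le_mul_of_nonneg_left (hTlimsup_le N) (by positivity)
      _ = C ^ 2 := by field_simp
  set L := limsup (fun N => ‖A N‖ ^ 2) atTop with hL
  have hbdd : IsBoundedUnder (· ≤ ·) atTop (fun N => ‖A N‖ ^ 2) :=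
    isBoundedUnder_of ⟨C ^ 2, fun N => by
      have := hAbd N; have := norm_nonneg (A N); nlinarith⟩
  have hbddlow : IsBoundedUnder (· ≥ ·) atTop (fun N => ‖A N‖ ^ 2) :=
    isBoundedUnder_of ⟨0, fun N => sq_nonneg _⟩
  have hcobdd : IsCoboundedUnder (· ≤ ·) atTop (fun N => ‖A N‖ ^ 2) :=
    hbddlow.isCoboundedUnder_le
  -- key estimate
  have hkey : ∀ N, L ≤ f N := by
    intro N
    have hN := hcpos N
    refine le_of_forall_pos_le_add ?_
    intro ε hε
    -- choose ε' with ε' * (2C + ε') ≤ ε/2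
    set ε' : ℝ := min 1 ((ε / 2) / (2 * C + 1)) with hε'def
    have hε'pos : 0 < ε' := lt_min one_pos (by positivity)
    have hε'1 : ε' ≤ 1 := min_le_left _ _
    have hε'2 : ε' * (2 * C + ε') ≤ ε / 2 := by
      have h1 : ε' ≤ (ε / 2) / (2 * C + 1) := min_le_right _ _
      have h2 : ε' * (2 * C + ε') ≤ ε' * (2 * C + 1) :=
        mul_le_mul_of_nonneg_left (by linarith) hε'pos.le
      have h3 : ε' * (2 * C + 1) ≤ ((ε / 2) / (2 * C + 1)) * (2 * C + 1) :=
        mul_le_mul_of_nonneg_right h1 (by linarith)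
      have h4 : ((ε / 2) / (2 * C + 1)) * (2 * C + 1) = ε / 2 := by
        have hne : (2 * C + 1) ≠ 0 := by positivity
        field_simp
      linarith
    -- the averaged vector
    set B : ℕ → E := fun M => (1 / c N) • ∑ h ∈ Φ N, ((1 / c M) • ∑ g ∈ Φ M, a (h * g))
      with hB
    -- (i) norm of B squared bounded by (1/cN²) T N M
    have hBsq : ∀ M, ‖B M‖ ^ 2 ≤ (1 / (c N) ^ 2) * T N M := by
      intro M
      have hM := hcpos M
      have hswap : B M = ((1 / c N) * (1 / c M)) • ∑ g ∈ Φ M, u N g := by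
        simp only [hB, hu, Finset.smul_sum, smul_smul]
        rw [Finset.sum_comm]
      have hnB : ‖B M‖ ≤ (1 / c N) * (1 / c M) * ∑ g ∈ Φ M, ‖u N g‖ := by
        rw [hswap, norm_smul, Real.norm_eq_abs, abs_of_pos (by positivity)]
        exact mul_le_mul_of_nonneg_left (norm_sum_le _ _) (by positivity)
      have hcs : (∑ g ∈ Φ M, ‖u N g‖) ^ 2 ≤ c M * ∑ g ∈ Φ M, ‖u N g‖ ^ 2 := by
        have := sq_sum_le_card_mul_sum_sq (s := Φ M) (f := fun g => ‖u N g‖)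
        exact_mod_cast this
      have hnB0 : 0 ≤ ‖B M‖ := norm_nonneg _
      have hsnn : 0 ≤ ∑ g ∈ Φ M, ‖u N g‖ :=
        Finset.sum_nonneg fun g _ => norm_nonneg _
      have hx : ‖B M‖ ^ 2 ≤ ((1 / c N) * (1 / c M)) ^ 2 * (∑ g ∈ Φ M, ‖u N g‖) ^ 2 := by
        rw [← mul_pow]
        exact pow_le_pow_left₀ hnB0 hnB 2
      have : ‖B M‖ ^ 2 ≤ ((1 / c N) * (1 / c M)) ^ 2
          * (c M * ∑ g ∈ Φ M, ‖u N g‖ ^ 2) :=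
        hx.trans (mul_le_mul_of_nonneg_left hcs (sq_nonneg _))
      rw [hTnorm]
      calc ‖B M‖ ^ 2 ≤ ((1 / c N) * (1 / c M)) ^ 2
            * (c M * ∑ g ∈ Φ M, ‖u N g‖ ^ 2) := this
        _ = (1 / (c N) ^ 2) * ((1 / c M) * ∑ g ∈ Φ M, ‖u N g‖ ^ 2) := by
            have hMne : c M ≠ 0 := (hcpos M).ne'
            have hNne : c N ≠ 0 := hN.ne'
            field_simp
    -- B M is bounded by C
    have hBbd : ∀ M, ‖B M‖ ≤ C := by
      intro M
      rw [hB]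
      exact avg_norm_le' (Φ N) _ C hC0 fun h _ =>
        avg_norm_le' (Φ M) _ C hC0 fun g _ => hbd _
    -- (ii) A M - B M small eventually
    have herr : Tendsto (fun M => (1 / c N) *
        ∑ h ∈ Φ N, (C * ((symmDiff ((Φ M).image (fun g => h * g)) (Φ M)).card : ℝ) / c M))
        atTop (nhds 0) := by
      have : Tendsto (fun M =>
          ∑ h ∈ Φ N, (C * ((symmDiff ((Φ M).image (fun g => h * g)) (Φ M)).card : ℝ) / c M))
          atTop (nhds 0) := by
        have h0 : (0:ℝ) = ∑ _h ∈ Φ N, (0:ℝ) := by simp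
        rw [h0]
        refine tendsto_finset_sum _ fun h _ => ?_
        have := (hfol h).const_mul C
        simpa [mul_div_assoc] using this
      have h2 := this.const_mul (1 / c N)
      simpa using h2
    have hAB : ∀ M, ‖A M - B M‖ ≤ (1 / c N) *
        ∑ h ∈ Φ N, (C * ((symmDiff ((Φ M).image (fun g => h * g)) (Φ M)).card : ℝ) / c M) := by
      intro M
      have hsplit : A M - B M = (1 / c N) •
          ∑ h ∈ Φ N, (A M - (1 / c M) • ∑ g ∈ Φ M, a (h * g)) := by
        rw [Finset.sum_sub_distrib, smul_sub, hB]
        congr 1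
        rw [Finset.sum_const]
        rw [← Nat.cast_smul_eq_nsmul ℝ, smul_smul]
        have : (1 / c N) * ((Φ N).card : ℝ) = 1 := by
          field_simp
          rfl
        rw [this, one_smul]
      rw [hsplit, norm_smul, Real.norm_eq_abs, abs_of_pos (by positivity)]
      refine mul_le_mul_of_nonneg_left ?_ (by positivity)
      calc ‖∑ h ∈ Φ N, (A M - (1 / c M) • ∑ g ∈ Φ M, a (h * g))‖
          ≤ ∑ h ∈ Φ N, ‖A M - (1 / c M) • ∑ g ∈ Φ M, a (h * g)‖ := norm_sum_le _ _
        _ ≤ ∑ h ∈ Φ N, (C * ((symmDiff ((Φ M).image (fun g => h * g)) (Φ M)).card : ℝ) / c M) :=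
            Finset.sum_le_sum fun h _ => shift_avg_err (Φ M) a C hC0 hbd h
    -- eventual estimate
    have hev : ∀ᶠ M in atTop, ‖A M‖ ^ 2 ≤ (1 / (c N) ^ 2) * T N M + ε / 2 := by
      have hsmall := herr.eventually (gt_mem_nhds hε'pos)
      filter_upwards [hsmall] with M hM
      have h1 : ‖A M - B M‖ ≤ ε' := (hAB M).trans hM.le
      have h2 : ‖A M‖ ≤ ‖B M‖ + ε' := by
        have := norm_sub_norm_le (A M) (B M)
        linarith
      have h3 : ‖A M‖ ^ 2 ≤ ‖B M‖ ^ 2 + ε' * (2 * C + ε') := by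
        have hBn := hBbd M
        have hA0 := norm_nonneg (A M)
        have hB0 := norm_nonneg (B M)
        nlinarith
      have := hBsq M
      linarith [hε'2]
    -- pass to limsup
    have hfreq : ∃ᶠ M in atTop, L - ε / 2 < ‖A M‖ ^ 2 := by
      refine frequently_lt_of_lt_limsup hcobdd ?_
      rw [← hL]; linarith
    have hfreq2 : ∃ᶠ M in atTop, (c N) ^ 2 * (L - ε) ≤ T N M := by
      refine (hfreq.and_eventually hev).mono ?_
      rintro M ⟨h1, h2⟩
      have h3 : L - ε ≤ (1 / (c N) ^ 2) * T N M := by linarith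
      have h4 : (c N) ^ 2 * (L - ε) ≤ (c N) ^ 2 * ((1 / (c N) ^ 2) * T N M) :=
        mul_le_mul_of_nonneg_left h3 (by positivity)
      have h5 : (c N) ^ 2 * ((1 / (c N) ^ 2) * T N M) = T N M := by
        field_simp
      linarith
    have h6 : (c N) ^ 2 * (L - ε) ≤ limsup (fun M => T N M) atTop :=
      le_limsup_of_frequently_le hfreq2 (hTbddAbove N)
    have h7 : L - ε ≤ f N := by
      rw [hf]
      have := mul_le_mul_of_nonneg_left h6 (a := 1 / (c N) ^ 2) (by positivity)
      have heq : (1 / (c N) ^ 2) * ((c N) ^ 2 * (L - ε)) = L - ε := by field_simp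
      linarith [heq ▸ this]
    linarith
  -- conclude
  have hLle : L ≤ 0 := by
    have hfb : IsBoundedUnder (· ≤ ·) atTop f := isBoundedUnder_of ⟨C ^ 2, fun N => hfle N⟩
    have : L ≤ limsup f atTop :=
      le_limsup_of_frequently_le (Frequently.of_forall fun N => hkey N) hfb
    rwa [hyp'] at this
  have hLge : 0 ≤ L :=
    le_limsup_of_frequently_le (Frequently.of_forall fun N => sq_nonneg _) hbdd
  have : L = 0 := le_antisymm hLle hLge
  exact this
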